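/- arXiv:2509.19989 — 2 statements merged into one kernel-verified Lean document; each statement's English description precedes it below -/
import Mathlib

section
/- The α-Ricci curvature κ_α(x,y) on a directed graph is concave in α: for α_1, α_2, λ ∈ [0,1], with ᾱ = λα_1 + (1−λ)α_2, one has κ_{ᾱ}(x,y) ≥ λ κ_{α_1}(x,y) + (1−λ) κ_{α_2}(x,y). -/
open Finset

variable {V : Type*} [Fintype V] [DecidableEq V]

/-- `π` is a coupling of `μ` and `ν`. -/
def IsCoupling (μ ν : V → ℝ) (π : V → V → ℝ) : Prop :=
  (∀ x y, 0 ≤ π x y) ∧ (∀ x, ∑ y, π x y = μ x) ∧ (∀ y, ∑ x, π x y = ν y)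

/-- The L1-Wasserstein distance with cost `d`. -/
noncomputable def W1 (d : V → V → ℝ) (μ ν : V → ℝ) : ℝ :=
  sInf {c | ∃ π, IsCoupling μ ν π ∧ c = ∑ x, ∑ y, π x y * d x y}

/-- The lazy distribution `μ_x^α`: mass `α` at `x` and `(1−α)·Pb(x,z)` elsewhere. -/
noncomputable def lazyDist (Pb : V → V → ℝ) (α : ℝ) (x : V) : V → ℝ :=
  fun z => if z = x then α else (1 - α) * Pb x z

/-- The `α`-Ricci curvature `κ_α(x,y) = 1 − W₁(μ_x^α, μ_y^α)/d(x,y)`. -/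
noncomputable def kappaAlpha (d : V → V → ℝ) (Pb : V → V → ℝ) (α : ℝ) (x y : V) : ℝ :=
  1 - W1 d (lazyDist Pb α x) (lazyDist Pb α y) / d x y

lemma lazyDist_nonneg (Pb : V → V → ℝ) (hPnn : ∀ x y, 0 ≤ Pb x y) {α : ℝ}
    (hα : α ∈ Set.Icc (0:ℝ) 1) (x z : V) : 0 ≤ lazyDist Pb α x z := by
  unfold lazyDist
  by_cases h : z = x
  · simp [h, hα.1]
  · simp only [h, if_false]
    exact mul_nonneg (by linarith [hα.2]) (hPnn x z)

lemma lazyDist_sum (Pb : V → V → ℝ) (hProw : ∀ x, ∑ y, Pb x y = 1)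
    (hPdiag : ∀ x, Pb x x = 0) (α : ℝ) (x : V) : ∑ z, lazyDist Pb α x z = 1 := by
  have h : ∀ z, lazyDist Pb α x z = (if z = x then α else 0) + (1 - α) * Pb x z := by
    intro z; unfold lazyDist; by_cases h : z = x <;> simp [h, hPdiag]
  rw [Finset.sum_congr rfl (fun z _ => h z), Finset.sum_add_distrib, ← Finset.mul_sum,
    hProw, Finset.sum_ite_eq' Finset.univ x (fun _ => α)]
  simp

lemma lazyDist_comb (Pb : V → V → ℝ) (α₁ α₂ l : ℝ) (x : V) :
    lazyDist Pb (l * α₁ + (1 - l) * α₂) x =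
      fun z => l * lazyDist Pb α₁ x z + (1 - l) * lazyDist Pb α₂ x z := by
  funext z
  unfold lazyDist
  by_cases h : z = x <;> simp [h] <;> ring

/-- Concavity of the `α`-Ricci curvature in `α`. -/
theorem kappaAlpha_concave (d : V → V → ℝ)
    (hnn : ∀ x y, 0 ≤ d x y)
    (htri : ∀ x y z, d x z ≤ d x y + d y z)
    (Pb : V → V → ℝ) (hPnn : ∀ x y, 0 ≤ Pb x y) (hProw : ∀ x, ∑ y, Pb x y = 1)
    (hPdiag : ∀ x, Pb x x = 0)
    (x y : V) (hxy : x ≠ y) (hd : 0 < d x y)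
    (α₁ α₂ l : ℝ) (hα₁ : α₁ ∈ Set.Icc (0:ℝ) 1) (hα₂ : α₂ ∈ Set.Icc (0:ℝ) 1)
    (hl : l ∈ Set.Icc (0:ℝ) 1) :
    l * kappaAlpha d Pb α₁ x y + (1 - l) * kappaAlpha d Pb α₂ x y
      ≤ kappaAlpha d Pb (l * α₁ + (1 - l) * α₂) x y := by
  obtain ⟨hl0, hl1⟩ := hl
  have hᾱ : l * α₁ + (1 - l) * α₂ ∈ Set.Icc (0:ℝ) 1 := by
    obtain ⟨h1, h2⟩ := hα₁; obtain ⟨h3, h4⟩ := hα₂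
    constructor <;> nlinarith
  set ᾱ := l * α₁ + (1 - l) * α₂ with hᾱdef
  set S : ℝ → Set ℝ := fun α =>
    {c | ∃ π, IsCoupling (lazyDist Pb α x) (lazyDist Pb α y) π ∧
      c = ∑ a, ∑ b, π a b * d a b} with hS
  have hSne : ∀ α ∈ Set.Icc (0:ℝ) 1, (S α).Nonempty := by
    intro α hα
    refine ⟨_, fun a b => lazyDist Pb α x a * lazyDist Pb α y b, ⟨?_, ?_, ?_⟩, rfl⟩
    · intro a b
      exact mul_nonneg (lazyDist_nonneg Pb hPnn hα x a) (lazyDist_nonneg Pb hPnn hα y b)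
    · intro a
      rw [← Finset.mul_sum, lazyDist_sum Pb hProw hPdiag, mul_one]
    · intro b
      rw [← Finset.sum_mul, lazyDist_sum Pb hProw hPdiag, one_mul]
  have hSbdd : ∀ α, BddBelow (S α) := by
    intro α
    refine ⟨0, fun c hc => ?_⟩
    obtain ⟨π, ⟨hπnn, _, _⟩, rfl⟩ := hc
    exact Finset.sum_nonneg fun a _ => Finset.sum_nonneg fun b _ =>
      mul_nonneg (hπnn a b) (hnn a b)
  -- main inequality on W1
  have hWle : W1 d (lazyDist Pb ᾱ x) (lazyDist Pb ᾱ y)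
      ≤ l * W1 d (lazyDist Pb α₁ x) (lazyDist Pb α₁ y)
        + (1 - l) * W1 d (lazyDist Pb α₂ x) (lazyDist Pb α₂ y) := by
    have key : ∀ c₁ ∈ S α₁, ∀ c₂ ∈ S α₂, sInf (S ᾱ) ≤ l * c₁ + (1 - l) * c₂ := by
      rintro c₁ ⟨π₁, ⟨h₁nn, h₁row, h₁col⟩, rfl⟩ c₂ ⟨π₂, ⟨h₂nn, h₂row, h₂col⟩, rfl⟩
      have hmem : l * (∑ a, ∑ b, π₁ a b * d a b) + (1 - l) * (∑ a, ∑ b, π₂ a b * d a b)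
          ∈ S ᾱ := by
        refine ⟨fun a b => l * π₁ a b + (1 - l) * π₂ a b, ⟨?_, ?_, ?_⟩, ?_⟩
        · intro a b
          exact add_nonneg (mul_nonneg hl0 (h₁nn a b))
            (mul_nonneg (by linarith) (h₂nn a b))
        · intro a
          rw [lazyDist_comb]
          rw [Finset.sum_add_distrib, ← Finset.mul_sum, ← Finset.mul_sum, h₁row, h₂row]
        · intro b
          rw [lazyDist_comb]
          rw [Finset.sum_add_distrib, ← Finset.mul_sum, ← Finset.mul_sum, h₁col, h₂col]
        · rw [Finset.mul_sum, Finset.mul_sum, ← Finset.sum_add_distrib]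
          refine Finset.sum_congr rfl fun a _ => ?_
          rw [Finset.mul_sum, Finset.mul_sum, ← Finset.sum_add_distrib]
          refine Finset.sum_congr rfl fun b _ => ?_
          ring
      exact csInf_le (hSbdd ᾱ) hmem
    have : sInf (S ᾱ) ≤ l * sInf (S α₁) + (1 - l) * sInf (S α₂) := by
      refine le_of_forall_pos_le_add fun ε hε => ?_
      obtain ⟨c₁, hc₁, hc₁lt⟩ := Real.lt_sInf_add_pos (hSne α₁ hα₁) (half_pos hε)
      obtain ⟨c₂, hc₂, hc₂lt⟩ := Real.lt_sInf_add_pos (hSne α₂ hα₂) (half_pos hε)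
      have := key c₁ hc₁ c₂ hc₂
      nlinarith [mul_le_mul_of_nonneg_left hc₁lt.le hl0,
        mul_le_mul_of_nonneg_left hc₂lt.le (by linarith : (0:ℝ) ≤ 1 - l)]
    exact this
  -- conclude
  unfold kappaAlpha
  have h1 : W1 d (lazyDist Pb ᾱ x) (lazyDist Pb ᾱ y) / d x y
      ≤ (l * W1 d (lazyDist Pb α₁ x) (lazyDist Pb α₁ y)
        + (1 - l) * W1 d (lazyDist Pb α₂ x) (lazyDist Pb α₂ y)) / d x y :=
    div_le_div_of_nonneg_right hWle hd.le |>.trans_eq rfl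
  rw [add_div, mul_div_assoc, mul_div_assoc] at h1
  linarith
end

section
/- The Lin–Lu–Yau Ricci curvature on a strongly connected finite directed graph admits the limit-free representation κ(x,y) = inf over f ∈ F_{xy} of ∇_{xy} ℒf, where F_{xy} is the set of 1-Lipschitz functions f with ∇_{xy} f = 1. -/
open Finset

variable {V : Type*} [Fintype V] [DecidableEq V]

/-- penalized cost -/
noncomputable def pcost (d : V → V → ℝ) (cM : ℝ) (a b : V → ℝ) (π : V → V → ℝ) : ℝ :=
  (∑ u, ∑ v, π u v * d u v) +
    cM * ((∑ u, |(∑ v, π u v) - a u|) + ∑ v, |(∑ u, π u v) - b v|)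

noncomputable def Rho (d : V → V → ℝ) (cM : ℝ) (a b : V → ℝ) : ℝ :=
  sInf {c | ∃ π : V → V → ℝ, (∀ u v, 0 ≤ π u v) ∧ c = pcost d cM a b π}

variable {d : V → V → ℝ} {cM : ℝ}

lemma pcost_nonneg (hd : ∀ u v, 0 ≤ d u v) (hcM : 0 ≤ cM) {a b : V → ℝ}
    {π : V → V → ℝ} (hπ : ∀ u v, 0 ≤ π u v) : 0 ≤ pcost d cM a b π := by
  unfold pcost
  have h1 : 0 ≤ ∑ u, ∑ v, π u v * d u v :=
    Finset.sum_nonneg fun u _ => Finset.sum_nonneg fun v _ => mul_nonneg (hπ u v) (hd u v)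
  have h2 : 0 ≤ (∑ u, |(∑ v, π u v) - a u|) + ∑ v, |(∑ u, π u v) - b v| := by
    have := Finset.sum_nonneg (fun u (_ : u ∈ univ) => abs_nonneg ((∑ v, π u v) - a u))
    have := Finset.sum_nonneg (fun v (_ : v ∈ univ) => abs_nonneg ((∑ u, π u v) - b v))
    linarith
  nlinarith

lemma rho_bddBelow (hd : ∀ u v, 0 ≤ d u v) (hcM : 0 ≤ cM) (a b : V → ℝ) :
    BddBelow {c | ∃ π : V → V → ℝ, (∀ u v, 0 ≤ π u v) ∧ c = pcost d cM a b π} := by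
  refine ⟨0, fun c hc => ?_⟩
  obtain ⟨π, hπ, rfl⟩ := hc
  exact pcost_nonneg hd hcM hπ

lemma rho_set_nonempty (a b : V → ℝ) :
    Set.Nonempty {c | ∃ π : V → V → ℝ, (∀ u v, 0 ≤ π u v) ∧ c = pcost d cM a b π} :=
  ⟨pcost d cM a b 0, 0, fun _ _ => le_refl 0, rfl⟩

lemma rho_le_pcost (hd : ∀ u v, 0 ≤ d u v) (hcM : 0 ≤ cM) (a b : V → ℝ)
    {π : V → V → ℝ} (hπ : ∀ u v, 0 ≤ π u v) : Rho d cM a b ≤ pcost d cM a b π :=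
  csInf_le (rho_bddBelow hd hcM a b) ⟨π, hπ, rfl⟩

lemma rho_nonneg (hd : ∀ u v, 0 ≤ d u v) (hcM : 0 ≤ cM) (a b : V → ℝ) :
    0 ≤ Rho d cM a b :=
  le_csInf (rho_set_nonempty a b) (fun c hc => by
    obtain ⟨π, hπ, rfl⟩ := hc; exact pcost_nonneg hd hcM hπ)

lemma rho_add (hd : ∀ u v, 0 ≤ d u v) (hcM : 0 ≤ cM) (a a' b b' : V → ℝ) :
    Rho d cM (a + a') (b + b') ≤ Rho d cM a b + Rho d cM a' b' := by
  have key : ∀ c₁ ∈ {c | ∃ π : V → V → ℝ, (∀ u v, 0 ≤ π u v) ∧ c = pcost d cM a b π},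
      ∀ c₂ ∈ {c | ∃ π : V → V → ℝ, (∀ u v, 0 ≤ π u v) ∧ c = pcost d cM a' b' π},
      Rho d cM (a + a') (b + b') ≤ c₁ + c₂ := by
    rintro c₁ ⟨π₁, hπ₁, rfl⟩ c₂ ⟨π₂, hπ₂, rfl⟩
    have hsum : ∀ u v, 0 ≤ π₁ u v + π₂ u v := fun u v => add_nonneg (hπ₁ u v) (hπ₂ u v)
    refine le_trans (rho_le_pcost hd hcM _ _ (π := fun u v => π₁ u v + π₂ u v) hsum) ?_
    unfold pcost
    have hc : (∑ u, ∑ v, (π₁ u v + π₂ u v) * d u v)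
        = (∑ u, ∑ v, π₁ u v * d u v) + ∑ u, ∑ v, π₂ u v * d u v := by
      rw [← Finset.sum_add_distrib]
      refine Finset.sum_congr rfl fun u _ => ?_
      rw [← Finset.sum_add_distrib]
      exact Finset.sum_congr rfl fun v _ => by ring
    have hp1 : (∑ u, |(∑ v, (π₁ u v + π₂ u v)) - (a + a') u|)
        ≤ (∑ u, |(∑ v, π₁ u v) - a u|) + ∑ u, |(∑ v, π₂ u v) - a' u| := by
      rw [← Finset.sum_add_distrib]
      refine Finset.sum_le_sum fun u _ => ?_
      have : (∑ v, (π₁ u v + π₂ u v)) - (a + a') u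
          = ((∑ v, π₁ u v) - a u) + ((∑ v, π₂ u v) - a' u) := by
        rw [Finset.sum_add_distrib]; simp; ring
      rw [this]; exact abs_add_le _ _
    have hp2 : (∑ v, |(∑ u, (π₁ u v + π₂ u v)) - (b + b') v|)
        ≤ (∑ v, |(∑ u, π₁ u v) - b v|) + ∑ v, |(∑ u, π₂ u v) - b' v| := by
      rw [← Finset.sum_add_distrib]
      refine Finset.sum_le_sum fun v _ => ?_
      have : (∑ u, (π₁ u v + π₂ u v)) - (b + b') v
          = ((∑ u, π₁ u v) - b v) + ((∑ u, π₂ u v) - b' v) := by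
        rw [Finset.sum_add_distrib]; simp; ring
      rw [this]; exact abs_add_le _ _
    rw [hc]
    nlinarith [mul_le_mul_of_nonneg_left (add_le_add hp1 hp2) hcM]
  have h1 : ∀ c₁ ∈ {c | ∃ π : V → V → ℝ, (∀ u v, 0 ≤ π u v) ∧ c = pcost d cM a b π},
      Rho d cM (a + a') (b + b') - c₁ ≤ Rho d cM a' b' := by
    intro c₁ hc₁
    refine le_csInf (rho_set_nonempty a' b') fun c₂ hc₂ => ?_
    linarith [key c₁ hc₁ c₂ hc₂]
  have h2 : Rho d cM (a + a') (b + b') - Rho d cM a' b' ≤ Rho d cM a b := by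
    refine le_csInf (rho_set_nonempty a b) fun c₁ hc₁ => ?_
    linarith [h1 c₁ hc₁]
  linarith

lemma pcost_smul (a b : V → ℝ) (π : V → V → ℝ) {c : ℝ} (hc : 0 ≤ c) :
    pcost d cM (c • a) (c • b) (fun u v => c * π u v) = c * pcost d cM a b π := by
  unfold pcost
  have h1 : (∑ u, ∑ v, (c * π u v) * d u v) = c * ∑ u, ∑ v, π u v * d u v := by
    rw [Finset.mul_sum]
    refine Finset.sum_congr rfl fun u _ => ?_
    rw [Finset.mul_sum]
    exact Finset.sum_congr rfl fun v _ => by ring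
  have h2 : (∑ u, |(∑ v, c * π u v) - (c • a) u|) = c * ∑ u, |(∑ v, π u v) - a u| := by
    rw [Finset.mul_sum]
    refine Finset.sum_congr rfl fun u _ => ?_
    rw [← Finset.mul_sum, Pi.smul_apply, smul_eq_mul, ← mul_sub, abs_mul, abs_of_nonneg hc]
  have h3 : (∑ v, |(∑ u, c * π u v) - (c • b) v|) = c * ∑ v, |(∑ u, π u v) - b v| := by
    rw [Finset.mul_sum]
    refine Finset.sum_congr rfl fun v _ => ?_
    rw [← Finset.mul_sum, Pi.smul_apply, smul_eq_mul, ← mul_sub, abs_mul, abs_of_nonneg hc]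
  rw [h1, h2, h3]; ring

lemma rho_smul_le (hd : ∀ u v, 0 ≤ d u v) (hcM : 0 ≤ cM) (a b : V → ℝ) {c : ℝ} (hc : 0 < c) :
    Rho d cM (c • a) (c • b) ≤ c * Rho d cM a b := by
  rw [mul_comm, ← div_le_iff₀ hc]
  refine le_csInf (rho_set_nonempty a b) fun t ht => ?_
  obtain ⟨π, hπ, rfl⟩ := ht
  rw [div_le_iff₀ hc, mul_comm]
  calc Rho d cM (c • a) (c • b) ≤ pcost d cM (c • a) (c • b) (fun u v => c * π u v) :=
        rho_le_pcost hd hcM _ _ (fun u v => mul_nonneg hc.le (hπ u v))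
    _ = c * pcost d cM a b π := pcost_smul a b π hc.le

lemma rho_smul (hd : ∀ u v, 0 ≤ d u v) (hcM : 0 ≤ cM) (a b : V → ℝ) {c : ℝ} (hc : 0 < c) :
    Rho d cM (c • a) (c • b) = c * Rho d cM a b := by
  refine le_antisymm (rho_smul_le hd hcM a b hc) ?_
  have := rho_smul_le hd hcM (c • a) (c • b) (c := c⁻¹) (by positivity)
  rw [← smul_assoc, ← smul_assoc, smul_eq_mul, inv_mul_cancel₀ hc.ne', one_smul, one_smul] at this
  calc c * Rho d cM a b ≤ c * (c⁻¹ * Rho d cM (c • a) (c • b)) := by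
        exact mul_le_mul_of_nonneg_left this hc.le
    _ = Rho d cM (c • a) (c • b) := by field_simp

lemma shrink (π : V → V → ℝ) (hπ : ∀ u v, 0 ≤ π u v) (w : V → ℝ) (hw : ∀ u, 0 ≤ w u) :
    ∃ σ : V → V → ℝ, (∀ u v, 0 ≤ σ u v) ∧ (∀ u v, σ u v ≤ π u v) ∧
      ∀ u, (∑ v, σ u v) = min (∑ v, π u v) (w u) := by
  refine ⟨fun u v => if (∑ v', π u v') = 0 then 0
      else π u v * (min (∑ v', π u v') (w u)) / (∑ v', π u v'), ?_, ?_, ?_⟩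
  · intro u v
    by_cases h : (∑ v', π u v') = 0
    · simp [h]
    · have hr : 0 < ∑ v', π u v' :=
        lt_of_le_of_ne (Finset.sum_nonneg fun v' _ => hπ u v') (Ne.symm h)
      simp only [if_neg h]
      have hm : 0 ≤ min (∑ v', π u v') (w u) := le_min hr.le (hw u)
      exact div_nonneg (mul_nonneg (hπ u v) hm) hr.le
  · intro u v
    by_cases h : (∑ v', π u v') = 0
    · simp [h, hπ u v]
    · have hr : 0 < ∑ v', π u v' :=
        lt_of_le_of_ne (Finset.sum_nonneg fun v' _ => hπ u v') (Ne.symm h)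
      simp only [if_neg h]
      rw [mul_div_assoc]
      calc π u v * (min (∑ v', π u v') (w u) / ∑ v', π u v') ≤ π u v * 1 := by
            refine mul_le_mul_of_nonneg_left ?_ (hπ u v)
            rw [div_le_one hr]; exact min_le_left _ _
        _ = π u v := mul_one _
  · intro u
    by_cases h : (∑ v', π u v') = 0
    · simp only [if_pos h, Finset.sum_const, smul_zero, h]
      rw [min_eq_left (hw u)]
      simp
    · have hr : 0 < ∑ v', π u v' :=
        lt_of_le_of_ne (Finset.sum_nonneg fun v' _ => hπ u v') (Ne.symm h)
      simp only [if_neg h]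
      rw [← Finset.sum_div, ← Finset.sum_mul, mul_comm, mul_div_assoc, div_self h, mul_one]

lemma W1_bddBelow (hd : ∀ u v, 0 ≤ d u v) (μ ν : V → ℝ) :
    BddBelow {c | ∃ π, IsCoupling μ ν π ∧ c = ∑ x, ∑ y, π x y * d x y} := by
  refine ⟨0, fun c hc => ?_⟩
  obtain ⟨π, hπ, rfl⟩ := hc
  exact Finset.sum_nonneg fun u _ => Finset.sum_nonneg fun v _ =>
    mul_nonneg (hπ.1 u v) (hd u v)

lemma W1_le_cost (hd : ∀ u v, 0 ≤ d u v) {μ ν : V → ℝ} {π : V → V → ℝ}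
    (hc : IsCoupling μ ν π) : W1 d μ ν ≤ ∑ x, ∑ y, π x y * d x y :=
  csInf_le (W1_bddBelow hd μ ν) ⟨π, hc, rfl⟩

/-- The repair lemma: any nonnegative matrix has penalized cost at least `W1`. -/
lemma W1_le_pcost (hd : ∀ u v, 0 ≤ d u v) {M : ℝ} (hM0 : 0 ≤ M) (hM : ∀ u v, d u v ≤ M)
    {μ ν : V → ℝ} (hμ0 : ∀ u, 0 ≤ μ u) (hμ1 : ∑ u, μ u = 1)
    (hν0 : ∀ v, 0 ≤ ν v) (hν1 : ∑ v, ν v = 1)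
    {π : V → V → ℝ} (hπ : ∀ u v, 0 ≤ π u v) :
    W1 d μ ν ≤ pcost d (2 * M) μ ν π := by
  obtain ⟨σ, hσ0, hσle, hσrow⟩ := shrink π hπ μ hμ0
  obtain ⟨τ', hτ0', hτle', hτrow'⟩ := shrink (fun v u => σ u v) (fun v u => hσ0 u v) ν hν0
  set τ : V → V → ℝ := fun u v => τ' v u with hτdef
  have hτ0 : ∀ u v, 0 ≤ τ u v := fun u v => hτ0' v u
  have hτleσ : ∀ u v, τ u v ≤ σ u v := fun u v => hτle' v u
  have hτleπ : ∀ u v, τ u v ≤ π u v := fun u v => le_trans (hτleσ u v) (hσle u v)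
  have hτcol : ∀ v, (∑ u, τ u v) = min (∑ u, σ u v) (ν v) := fun v => hτrow' v
  -- row sums of τ are at most μ, column sums at most ν
  have hτrowle : ∀ u, (∑ v, τ u v) ≤ μ u := fun u =>
    le_trans (Finset.sum_le_sum fun v _ => hτleσ u v)
      (le_trans (le_of_eq (hσrow u)) (min_le_right _ _))
  have hτcolle : ∀ v, (∑ u, τ u v) ≤ ν v := fun v =>
    le_trans (le_of_eq (hτcol v)) (min_le_right _ _)
  set s : ℝ := 1 - ∑ u, ∑ v, τ u v with hs
  have hsrow : s = ∑ u, (μ u - ∑ v, τ u v) := by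
    rw [Finset.sum_sub_distrib, hμ1, hs]
  have hscol : s = ∑ v, (ν v - ∑ u, τ u v) := by
    rw [Finset.sum_sub_distrib, hν1, hs, Finset.sum_comm]
  have hs0 : 0 ≤ s := by
    rw [hsrow]
    exact Finset.sum_nonneg fun u _ => sub_nonneg.2 (hτrowle u)
  -- cost of τ is at most cost of π
  have hcostτ : (∑ u, ∑ v, τ u v * d u v) ≤ ∑ u, ∑ v, π u v * d u v :=
    Finset.sum_le_sum fun u _ => Finset.sum_le_sum fun v _ =>
      mul_le_mul_of_nonneg_right (hτleπ u v) (hd u v)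
  -- bookkeeping: s is bounded by twice the penalty
  have hbook : s ≤ 2 * ((∑ u, |(∑ v, π u v) - μ u|) + ∑ v, |(∑ u, π u v) - ν v|) := by
    have e1 : (1 : ℝ) - ∑ u, ∑ v, π u v ≤ ∑ u, |(∑ v, π u v) - μ u| := by
      calc (1 : ℝ) - ∑ u, ∑ v, π u v = ∑ u, (μ u - ∑ v, π u v) := by
            rw [Finset.sum_sub_distrib, hμ1]
        _ ≤ ∑ u, |(∑ v, π u v) - μ u| :=
            Finset.sum_le_sum fun u _ => by
              rw [abs_sub_comm]; exact le_abs_self _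
    have e2 : (∑ u, ∑ v, π u v) - ∑ u, ∑ v, σ u v ≤ ∑ u, |(∑ v, π u v) - μ u| := by
      rw [← Finset.sum_sub_distrib]
      refine Finset.sum_le_sum fun u _ => ?_
      rw [hσrow u]
      rcases le_total (∑ v, π u v) (μ u) with h | h
      · rw [min_eq_left h]; simp
      · rw [min_eq_right h, abs_of_nonneg (by linarith)]
    have e3 : (∑ u, ∑ v, σ u v) - ∑ u, ∑ v, τ u v ≤ ∑ v, |(∑ u, π u v) - ν v| := by
      rw [Finset.sum_comm (f := fun u v => σ u v), Finset.sum_comm (f := fun u v => τ u v),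
        ← Finset.sum_sub_distrib]
      refine Finset.sum_le_sum fun v _ => ?_
      have hσcolle : (∑ u, σ u v) ≤ ∑ u, π u v :=
        Finset.sum_le_sum fun u _ => hσle u v
      rw [hτcol v]
      rcases le_total (∑ u, σ u v) (ν v) with h | h
      · rw [min_eq_left h]; simp
      · rw [min_eq_right h]
        calc (∑ u, σ u v) - ν v ≤ (∑ u, π u v) - ν v := by linarith
          _ ≤ |(∑ u, π u v) - ν v| := le_abs_self _
    have : s = ((1 : ℝ) - ∑ u, ∑ v, π u v) + ((∑ u, ∑ v, π u v) - ∑ u, ∑ v, σ u v)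
        + ((∑ u, ∑ v, σ u v) - ∑ u, ∑ v, τ u v) := by rw [hs]; ring
    rw [this]
    have habs : (0:ℝ) ≤ ∑ v, |(∑ u, π u v) - ν v| :=
      Finset.sum_nonneg fun v _ => abs_nonneg _
    linarith
  -- construct the final coupling
  rcases eq_or_lt_of_le hs0 with hseq | hspos
  · -- τ is already a coupling
    have hrow : ∀ u, (∑ v, τ u v) = μ u := by
      intro u
      have := (Finset.sum_eq_zero_iff_of_nonneg
        (fun u (_ : u ∈ univ) => sub_nonneg.2 (hτrowle u))).1 (by rw [← hsrow, ← hseq])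
      have := this u (Finset.mem_univ u)
      linarith
    have hcol : ∀ v, (∑ u, τ u v) = ν v := by
      intro v
      have := (Finset.sum_eq_zero_iff_of_nonneg
        (fun v (_ : v ∈ univ) => sub_nonneg.2 (hτcolle v))).1 (by rw [← hscol, ← hseq])
      have := this v (Finset.mem_univ v)
      linarith
    have hW := W1_le_cost hd (μ := μ) (ν := ν) (π := τ) ⟨hτ0, hrow, hcol⟩
    have hpen : 0 ≤ (∑ u, |(∑ v, π u v) - μ u|) + ∑ v, |(∑ u, π u v) - ν v| := by
      have h1 : (0:ℝ) ≤ ∑ u, |(∑ v, π u v) - μ u| := Finset.sum_nonneg fun u _ => abs_nonneg _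
      have h2 : (0:ℝ) ≤ ∑ v, |(∑ u, π u v) - ν v| := Finset.sum_nonneg fun v _ => abs_nonneg _
      linarith
    unfold pcost
    nlinarith
  · -- add the product of deficits
    set π' : V → V → ℝ := fun u v => τ u v + (μ u - ∑ v', τ u v') * (ν v - ∑ u', τ u' v) / s
      with hπ'def
    have hcoup : IsCoupling μ ν π' := by
      refine ⟨fun u v => ?_, fun u => ?_, fun v => ?_⟩
      · have h1 : 0 ≤ (μ u - ∑ v', τ u v') := sub_nonneg.2 (hτrowle u)
        have h2 : 0 ≤ (ν v - ∑ u', τ u' v) := sub_nonneg.2 (hτcolle v)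
        have := div_nonneg (mul_nonneg h1 h2) hs0
        exact add_nonneg (hτ0 u v) this
      · rw [Finset.sum_add_distrib]
        have : (∑ v, (μ u - ∑ v', τ u v') * (ν v - ∑ u', τ u' v) / s)
            = (μ u - ∑ v', τ u v') * (∑ v, (ν v - ∑ u', τ u' v)) / s := by
          rw [Finset.mul_sum, Finset.sum_div]
        rw [this, ← hscol, mul_div_assoc, div_self hspos.ne', mul_one]
        ring
      · rw [Finset.sum_add_distrib]
        have : (∑ u, (μ u - ∑ v', τ u v') * (ν v - ∑ u', τ u' v) / s)
            = (∑ u, (μ u - ∑ v', τ u v')) * (ν v - ∑ u', τ u' v) / s := by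
          rw [Finset.sum_mul, Finset.sum_div]
        rw [this, ← hsrow, mul_comm, mul_div_assoc, div_self hspos.ne', mul_one]
        ring
    have hW := W1_le_cost hd hcoup
    have hcost' : (∑ u, ∑ v, π' u v * d u v)
        ≤ (∑ u, ∑ v, τ u v * d u v) + M * s := by
      have : ∀ u v, π' u v * d u v
          ≤ τ u v * d u v + (μ u - ∑ v', τ u v') * (ν v - ∑ u', τ u' v) / s * M := by
        intro u v
        have h1 : 0 ≤ (μ u - ∑ v', τ u v') := sub_nonneg.2 (hτrowle u)
        have h2 : 0 ≤ (ν v - ∑ u', τ u' v) := sub_nonneg.2 (hτcolle v)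
        have h3 : 0 ≤ (μ u - ∑ v', τ u v') * (ν v - ∑ u', τ u' v) / s :=
          div_nonneg (mul_nonneg h1 h2) hs0
        have := mul_le_mul_of_nonneg_left (hM u v) h3
        have h4 := mul_le_mul_of_nonneg_right (le_refl (τ u v)) (hd u v)
        rw [hπ'def]
        have h5 : 0 ≤ τ u v := hτ0 u v
        nlinarith [hd u v, hM u v]
      calc (∑ u, ∑ v, π' u v * d u v)
          ≤ ∑ u, ∑ v, (τ u v * d u v
              + (μ u - ∑ v', τ u v') * (ν v - ∑ u', τ u' v) / s * M) :=
            Finset.sum_le_sum fun u _ => Finset.sum_le_sum fun v _ => this u v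
        _ = ∑ u, ((∑ v, τ u v * d u v)
              + ∑ v, (μ u - ∑ v', τ u v') * (ν v - ∑ u', τ u' v) / s * M) :=
            Finset.sum_congr rfl fun u _ => Finset.sum_add_distrib
        _ = (∑ u, ∑ v, τ u v * d u v)
              + ∑ u, ∑ v, (μ u - ∑ v', τ u v') * (ν v - ∑ u', τ u' v) / s * M :=
            Finset.sum_add_distrib
        _ = (∑ u, ∑ v, τ u v * d u v) + M * s := by
            have hA : ∀ u, (∑ v, (μ u - ∑ v', τ u v') * (ν v - ∑ u', τ u' v) / s * M)
                = (μ u - ∑ v', τ u v') * M := by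
              intro u
              rw [← Finset.sum_mul, ← Finset.sum_div, ← Finset.mul_sum, ← hscol,
                mul_div_assoc, div_self hspos.ne', mul_one]
            rw [Finset.sum_congr rfl fun u _ => hA u, ← Finset.sum_mul, ← hsrow, mul_comm]
    have hpen2 : M * s ≤ 2 * M * ((∑ u, |(∑ v, π u v) - μ u|) + ∑ v, |(∑ u, π u v) - ν v|) := by
      have := mul_le_mul_of_nonneg_left hbook hM0
      nlinarith
    unfold pcost
    linarith

lemma rho_single (hd : ∀ u v, 0 ≤ d u v) (hcM : 0 ≤ cM) (u v : V) :
    Rho d cM (Pi.single u 1) (Pi.single v 1) ≤ d u v := by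
  have h := rho_le_pcost (d := d) (cM := cM) hd hcM (Pi.single u 1) (Pi.single v 1)
    (π := fun p q => (if p = u then (1:ℝ) else 0) * (if q = v then 1 else 0))
    (fun p q => by positivity)
  refine le_trans h (le_of_eq ?_)
  unfold pcost
  have hq : (∑ q, if q = v then (1:ℝ) else 0) = 1 := by simp
  have hp : (∑ p, if p = u then (1:ℝ) else 0) = 1 := by simp
  have hrow : ∀ p, (∑ q, (if p = u then (1:ℝ) else 0) * (if q = v then 1 else 0))
      = (Pi.single u (1:ℝ) : V → ℝ) p := by
    intro p
    rw [← Finset.mul_sum, hq, mul_one, Pi.single_apply]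
  have hcol : ∀ q, (∑ p, (if p = u then (1:ℝ) else 0) * (if q = v then 1 else 0))
      = (Pi.single v (1:ℝ) : V → ℝ) q := by
    intro q
    rw [← Finset.sum_mul, hp, one_mul, Pi.single_apply]
  have hcost : (∑ p, ∑ q, ((if p = u then (1:ℝ) else 0) * (if q = v then 1 else 0)) * d p q)
      = d u v := by
    rw [Finset.sum_eq_single u]
    · rw [Finset.sum_eq_single v]
      · simp
      · intro q _ hq'; simp [hq']
      · intro h; exact absurd (Finset.mem_univ v) h
    · intro p _ hp'; simp [hp']
    · intro h; exact absurd (Finset.mem_univ u) h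
  rw [hcost]
  simp only [hrow, hcol]
  simp

lemma single_sum_rep (a : V → ℝ) : a = ∑ u, a u • (Pi.single u (1:ℝ) : V → ℝ) := by
  funext z
  rw [Finset.sum_apply]
  simp only [Pi.smul_apply, Pi.single_apply, smul_eq_mul]
  rw [Finset.sum_congr rfl (fun u _ => by rw [mul_ite, mul_one, mul_zero]),
    Finset.sum_ite_eq univ z a]
  simp

lemma exists_dual_potential [Nonempty V] (hd : ∀ u v, 0 ≤ d u v)
    (hrefl : ∀ u, d u u = 0) (htri : ∀ u v w, d u w ≤ d u v + d v w)
    {μ ν : V → ℝ} (hμ0 : ∀ u, 0 ≤ μ u) (hμ1 : ∑ u, μ u = 1)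
    (hν0 : ∀ v, 0 ≤ ν v) (hν1 : ∑ v, ν v = 1) :
    ∃ f : V → ℝ, (∀ u v, f v - f u ≤ d u v) ∧ W1 d μ ν ≤ ∑ z, f z * (ν z - μ z) := by
  classical
  set M : ℝ := ∑ u, ∑ v, d u v with hMdef
  have hM0 : 0 ≤ M := Finset.sum_nonneg fun u _ => Finset.sum_nonneg fun v _ => hd u v
  have hM : ∀ u v, d u v ≤ M := by
    intro u v
    calc d u v ≤ ∑ v', d u v' := Finset.single_le_sum (fun v' _ => hd u v') (Finset.mem_univ v)
      _ ≤ M := Finset.single_le_sum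
          (fun u' (_ : u' ∈ univ) => Finset.sum_nonneg fun v' _ => hd u' v')
          (Finset.mem_univ u)
  set cM : ℝ := 2 * M with hcMdef
  have hcM0 : 0 ≤ cM := by positivity
  -- N is the sublinear functional
  set N : ((V → ℝ) × (V → ℝ)) → ℝ := fun p => Rho d cM p.1 p.2 with hNdef
  have hne : ((μ, ν) : (V → ℝ) × (V → ℝ)) ≠ 0 := by
    intro h
    have : μ = 0 := congrArg Prod.fst h
    rw [this] at hμ1
    simp at hμ1
  set pl : ((V → ℝ) × (V → ℝ)) →ₗ.[ℝ] ℝ :=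
    LinearPMap.mkSpanSingleton ((μ, ν) : (V → ℝ) × (V → ℝ)) (Rho d cM μ ν) hne with hpl
  have N_hom : ∀ c : ℝ, 0 < c → ∀ p : (V → ℝ) × (V → ℝ), N (c • p) = c * N p := by
    intro c hc p
    simp only [hNdef, Prod.smul_fst, Prod.smul_snd]
    exact rho_smul hd hcM0 p.1 p.2 hc
  have N_add : ∀ p q : (V → ℝ) × (V → ℝ), N (p + q) ≤ N p + N q := by
    intro p q
    simp only [hNdef, Prod.fst_add, Prod.snd_add]
    exact rho_add hd hcM0 p.1 q.1 p.2 q.2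
  have hN0 : ∀ p : (V → ℝ) × (V → ℝ), 0 ≤ N p := fun p => rho_nonneg hd hcM0 p.1 p.2
  have hf : ∀ z : pl.domain, pl z ≤ N z := by
    rintro ⟨w, hw⟩
    obtain ⟨c, hc⟩ := Submodule.mem_span_singleton.1 hw
    subst hc
    have happ : pl ⟨c • ((μ, ν) : (V → ℝ) × (V → ℝ)), hw⟩ = c * Rho d cM μ ν := by
      have := LinearPMap.mkSpanSingleton'_apply ((μ, ν) : (V → ℝ) × (V → ℝ))
        (Rho d cM μ ν) _ c hw
      simp at this; exact this
    rw [happ]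
    have hNval : N (c • ((μ, ν) : (V → ℝ) × (V → ℝ))) = Rho d cM (c • μ) (c • ν) := rfl
    rw [hNval]
    rcases lt_trichotomy 0 c with hc0 | hc0 | hc0
    · exact le_of_eq (rho_smul hd hcM0 μ ν hc0).symm
    · subst hc0
      simp only [zero_smul, zero_mul]
      exact rho_nonneg hd hcM0 0 0
    · have hpos : 0 < -c := by linarith
      have h1 := rho_add hd hcM0 (c • μ) ((-c) • μ) (c • ν) ((-c) • ν)
      have h2 : (c • μ) + ((-c) • μ) = 0 := by rw [← add_smul]; simp
      have h3 : (c • ν) + ((-c) • ν) = 0 := by rw [← add_smul]; simp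
      rw [h2, h3] at h1
      have h4 := rho_nonneg hd hcM0 (V := V) 0 0
      have h5 : Rho d cM ((-c) • μ) ((-c) • ν) = (-c) * Rho d cM μ ν :=
        rho_smul hd hcM0 μ ν hpos
      linarith
  obtain ⟨g, hg1, hg2⟩ := exists_extension_of_le_sublinear pl N N_hom N_add hf
  have hgval : g ((μ, ν) : (V → ℝ) × (V → ℝ)) = Rho d cM μ ν := by
    have hmem : ((μ, ν) : (V → ℝ) × (V → ℝ)) ∈ pl.domain :=
      Submodule.mem_span_singleton_self _
    have := hg1 ⟨(μ, ν), hmem⟩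
    rw [this, LinearPMap.mkSpanSingleton_apply]
  set φ : V → ℝ := fun u => g ((Pi.single u (1:ℝ) : V → ℝ), (0 : V → ℝ)) with hφdef
  set ψ : V → ℝ := fun v => g ((0 : V → ℝ), (Pi.single v (1:ℝ) : V → ℝ)) with hψdef
  have hgrep : ∀ a b : V → ℝ, g (a, b) = (∑ u, a u * φ u) + ∑ v, b v * ψ v := by
    intro a b
    have hab : ((a, b) : (V → ℝ) × (V → ℝ))
        = (∑ u, a u • (((Pi.single u (1:ℝ) : V → ℝ), (0 : V → ℝ)) : (V → ℝ) × (V → ℝ)))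
          + ∑ v, b v • ((((0 : V → ℝ)), (Pi.single v (1:ℝ) : V → ℝ)) : (V → ℝ) × (V → ℝ)) := by
      apply Prod.ext
      · rw [Prod.fst_add, Prod.fst_sum, Prod.fst_sum]
        simp only [Prod.smul_fst, smul_zero]
        rw [Finset.sum_const, smul_zero, add_zero]
        exact single_sum_rep a
      · rw [Prod.snd_add, Prod.snd_sum, Prod.snd_sum]
        simp only [Prod.smul_snd, smul_zero]
        rw [Finset.sum_const, smul_zero, zero_add]
        exact single_sum_rep b
    rw [hab, map_add, map_sum, map_sum]
    simp only [map_smul, smul_eq_mul]; rfl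
  have hconstr : ∀ u v, φ u + ψ v ≤ d u v := by
    intro u v
    have h2 : g (((Pi.single u (1:ℝ) : V → ℝ), (Pi.single v (1:ℝ) : V → ℝ))
          : (V → ℝ) × (V → ℝ)) = φ u + ψ v := by
      have hsplit : (((Pi.single u (1:ℝ) : V → ℝ), (Pi.single v (1:ℝ) : V → ℝ))
            : (V → ℝ) × (V → ℝ))
          = (((Pi.single u (1:ℝ) : V → ℝ), (0 : V → ℝ)) : (V → ℝ) × (V → ℝ))
            + (((0 : V → ℝ), (Pi.single v (1:ℝ) : V → ℝ)) : (V → ℝ) × (V → ℝ)) := by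
        apply Prod.ext <;> simp
      rw [hsplit, map_add]
    have h1 := hg2 (((Pi.single u (1:ℝ) : V → ℝ), (Pi.single v (1:ℝ) : V → ℝ))
          : (V → ℝ) × (V → ℝ))
    rw [h2] at h1
    exact le_trans h1 (rho_single hd hcM0 u v)
  have hune : (univ : Finset V).Nonempty := Finset.univ_nonempty
  set f : V → ℝ := fun v => univ.inf' hune (fun u => d u v - φ u) with hfdef
  have hLip : ∀ u v, f v - f u ≤ d u v := by
    intro u v
    obtain ⟨u', _, hu'⟩ := Finset.exists_mem_eq_inf' hune (fun p => d p u - φ p)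
    have h1 : f v ≤ d u' v - φ u' := Finset.inf'_le _ (Finset.mem_univ u')
    have h2 : f u = d u' u - φ u' := hu'
    have h3 := htri u' u v
    rw [h2]
    linarith
  have hψf : ∀ v, ψ v ≤ f v := fun v =>
    Finset.le_inf' hune _ (fun u _ => by have := hconstr u v; linarith)
  have hφf : ∀ u, φ u ≤ -f u := by
    intro u
    have h1 : f u ≤ d u u - φ u := Finset.inf'_le _ (Finset.mem_univ u)
    rw [hrefl u] at h1
    linarith
  refine ⟨f, hLip, ?_⟩
  have hW1rho : W1 d μ ν ≤ Rho d cM μ ν := by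
    refine le_csInf (rho_set_nonempty μ ν) ?_
    rintro t ⟨π, hπ, rfl⟩
    exact W1_le_pcost hd hM0 hM hμ0 hμ1 hν0 hν1 hπ
  have hfinal : Rho d cM μ ν ≤ ∑ z, f z * (ν z - μ z) := by
    rw [← hgval, hgrep μ ν]
    have h1 : (∑ u, μ u * φ u) ≤ ∑ u, μ u * (-f u) :=
      Finset.sum_le_sum fun u _ => mul_le_mul_of_nonneg_left (hφf u) (hμ0 u)
    have h2 : (∑ v, ν v * ψ v) ≤ ∑ v, ν v * f v :=
      Finset.sum_le_sum fun v _ => mul_le_mul_of_nonneg_left (hψf v) (hν0 v)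
    have h3 : (∑ z, f z * (ν z - μ z)) = (∑ u, μ u * (-f u)) + ∑ v, ν v * f v := by
      rw [← Finset.sum_add_distrib]
      exact Finset.sum_congr rfl fun z _ => by ring
    linarith
  linarith

lemma prod_coupling {μ ν : V → ℝ} (hμ0 : ∀ u, 0 ≤ μ u) (hμ1 : ∑ u, μ u = 1)
    (hν0 : ∀ v, 0 ≤ ν v) (hν1 : ∑ v, ν v = 1) :
    IsCoupling μ ν (fun u v => μ u * ν v) :=
  ⟨fun u v => mul_nonneg (hμ0 u) (hν0 v),
   fun u => by rw [← Finset.mul_sum, hν1, mul_one],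
   fun v => by rw [← Finset.sum_mul, hμ1, one_mul]⟩

lemma dual_le_W1 (hd : ∀ u v, 0 ≤ d u v) {μ ν : V → ℝ}
    (hμ0 : ∀ u, 0 ≤ μ u) (hμ1 : ∑ u, μ u = 1)
    (hν0 : ∀ v, 0 ≤ ν v) (hν1 : ∑ v, ν v = 1)
    {h : V → ℝ} (hLip : ∀ u v, h v - h u ≤ d u v) :
    (∑ z, h z * (ν z - μ z)) ≤ W1 d μ ν := by
  refine le_csInf ⟨_, (fun u v => μ u * ν v), prod_coupling hμ0 hμ1 hν0 hν1, rfl⟩ ?_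
  rintro t ⟨π, ⟨hπ0, hrow, hcol⟩, rfl⟩
  have e1 : (∑ z, h z * (ν z - μ z)) = ∑ u, ∑ v, π u v * (h v - h u) := by
    calc (∑ z, h z * (ν z - μ z))
        = (∑ z, (∑ u, π u z) * h z) - ∑ z, (∑ v, π z v) * h z := by
          rw [← Finset.sum_sub_distrib]
          refine Finset.sum_congr rfl fun z _ => ?_
          rw [hrow z, hcol z]; ring
      _ = (∑ z, ∑ u, π u z * h z) - ∑ z, ∑ v, π z v * h z := by
          congr 1 <;> exact Finset.sum_congr rfl fun z _ => Finset.sum_mul _ _ _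
      _ = (∑ u, ∑ z, π u z * h z) - ∑ z, ∑ v, π z v * h z := by rw [Finset.sum_comm]
      _ = ∑ u, ∑ v, π u v * (h v - h u) := by
          rw [← Finset.sum_sub_distrib]
          refine Finset.sum_congr rfl fun u _ => ?_
          rw [← Finset.sum_sub_distrib]
          exact Finset.sum_congr rfl fun v _ => by ring
  rw [e1]
  exact Finset.sum_le_sum fun u _ => Finset.sum_le_sum fun v _ =>
    mul_le_mul_of_nonneg_left (hLip u v) (hπ0 u v)

lemma lazy_eq {Pb : V → V → ℝ} {w : V} (hPw : Pb w w = 0) (α : ℝ) (z : V) :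
    lazyDist Pb α w z = α * (if z = w then 1 else 0) + (1 - α) * Pb w z := by
  unfold lazyDist
  by_cases hz : z = w
  · subst hz; simp [hPw]
  · simp [hz]

lemma lazy_nonneg {Pb : V → V → ℝ} (hPnn : ∀ u v, 0 ≤ Pb u v) {α : ℝ}
    (h0 : 0 ≤ α) (h1 : α ≤ 1) (w : V) : ∀ z, 0 ≤ lazyDist Pb α w z := by
  intro z
  unfold lazyDist
  by_cases hz : z = w
  · simp [hz, h0]
  · simp only [if_neg hz]
    exact mul_nonneg (by linarith) (hPnn w z)

lemma lazy_sum {Pb : V → V → ℝ} {w : V} (hPw : Pb w w = 0)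
    (hProw : ∑ z, Pb w z = 1) (α : ℝ) : ∑ z, lazyDist Pb α w z = 1 := by
  rw [Finset.sum_congr rfl fun z _ => lazy_eq hPw α z, Finset.sum_add_distrib,
    ← Finset.mul_sum, ← Finset.mul_sum, hProw, Finset.sum_ite_eq' univ w (fun _ => (1:ℝ))]
  simp

lemma lazy_dualval {Pb : V → V → ℝ} {x y : V} (hPx : Pb x x = 0) (hPy : Pb y y = 0)
    (α : ℝ) (h : V → ℝ) :
    (∑ z, h z * (lazyDist Pb α y z - lazyDist Pb α x z))
      = α * (h y - h x) + (1 - α) * ((∑ z, Pb y z * h z) - ∑ z, Pb x z * h z) := by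
  have e1 : (∑ z, h z * (lazyDist Pb α y z - lazyDist Pb α x z))
      = (α * ∑ z, (if z = y then h z else 0)) - (α * ∑ z, (if z = x then h z else 0))
        + ((1 - α) * ∑ z, Pb y z * h z) - (1 - α) * ∑ z, Pb x z * h z := by
    rw [Finset.mul_sum, Finset.mul_sum, Finset.mul_sum, Finset.mul_sum,
      ← Finset.sum_sub_distrib, ← Finset.sum_add_distrib, ← Finset.sum_sub_distrib]
    refine Finset.sum_congr rfl fun z _ => ?_
    rw [lazy_eq hPy α z, lazy_eq hPx α z]
    split_ifs <;> ring
  rw [e1, Finset.sum_ite_eq' univ y h, Finset.sum_ite_eq' univ x h]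
  simp only [Finset.mem_univ, if_true]
  ring

/-- Limit-free representation of the Lin–Lu–Yau curvature:
`κ(x,y) = lim_{α→1⁻} κ_α(x,y)/(1−α)` exists and equals
`inf { ∇_{xy} ℒf : f 1-Lipschitz, ∇_{xy} f = 1 }`. -/
theorem LLY_limit_free [Nonempty V] (d : V → V → ℝ)
    (hnn : ∀ x y, 0 ≤ d x y)
    (hrefl : ∀ x, d x x = 0)
    (htri : ∀ x y z, d x z ≤ d x y + d y z)
    (Pb : V → V → ℝ) (hPnn : ∀ x y, 0 ≤ Pb x y) (hProw : ∀ x, ∑ y, Pb x y = 1)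
    (hPdiag : ∀ x, Pb x x = 0)
    (x y : V) (hxy : x ≠ y) (hd : 0 < d x y) :
    Filter.Tendsto (fun α => kappaAlpha d Pb α x y / (1 - α))
      (nhdsWithin 1 (Set.Iio 1))
      (nhds (sInf {r | ∃ f : V → ℝ,
        (∀ u v, f v - f u ≤ d u v) ∧ (f y - f x) / d x y = 1 ∧
        r = ((f y - ∑ u, Pb y u * f u) - (f x - ∑ u, Pb x u * f u)) / d x y})) := by
  classical
  set S : Set ℝ := {r | ∃ f : V → ℝ,
      (∀ u v, f v - f u ≤ d u v) ∧ (f y - f x) / d x y = 1 ∧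
      r = ((f y - ∑ u, Pb y u * f u) - (f x - ∑ u, Pb x u * f u)) / d x y} with hSdef
  have hSne : S.Nonempty := by
    refine ⟨_, fun v => d x v, fun u v => by have := htri x u v; simp; linarith, ?_, rfl⟩
    show (d x y - d x x) / d x y = 1
    rw [hrefl x, sub_zero, div_self hd.ne']
  have hSbdd : BddBelow S := by
    refine ⟨-(((∑ u, Pb y u * d y u) + ∑ u, Pb x u * d u x) / d x y), ?_⟩
    rintro r ⟨f, hLip, -, rfl⟩
    have h1 : f y - ∑ u, Pb y u * f u = ∑ u, Pb y u * (f y - f u) := by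
      rw [Finset.sum_congr rfl (fun u _ => mul_sub (Pb y u) (f y) (f u)),
        Finset.sum_sub_distrib, ← Finset.sum_mul, hProw y, one_mul]
    have h2 : f x - ∑ u, Pb x u * f u = ∑ u, Pb x u * (f x - f u) := by
      rw [Finset.sum_congr rfl (fun u _ => mul_sub (Pb x u) (f x) (f u)),
        Finset.sum_sub_distrib, ← Finset.sum_mul, hProw x, one_mul]
    have h3 : -(∑ u, Pb y u * d y u) ≤ ∑ u, Pb y u * (f y - f u) := by
      rw [← Finset.sum_neg_distrib]
      refine Finset.sum_le_sum fun u _ => ?_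
      rw [neg_mul_eq_mul_neg]
      exact mul_le_mul_of_nonneg_left (by have := hLip y u; linarith) (hPnn y u)
    have h4 : (∑ u, Pb x u * (f x - f u)) ≤ ∑ u, Pb x u * d u x :=
      Finset.sum_le_sum fun u _ => mul_le_mul_of_nonneg_left (hLip u x) (hPnn x u)
    rw [h1, h2, ← neg_div, div_le_div_iff_of_pos_right hd]
    linarith
  have key : ∀ α : ℝ, 1/2 < α → α < 1 → kappaAlpha d Pb α x y / (1 - α) = sInf S := by
    intro α hα2 hα1
    have h0α : (0 : ℝ) ≤ α := by linarith
    have h1α : (0 : ℝ) < 1 - α := by linarith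
    have hμ0 := lazy_nonneg hPnn h0α hα1.le x
    have hν0 := lazy_nonneg hPnn h0α hα1.le y
    have hμ1 := lazy_sum (hPdiag x) (hProw x) α
    have hν1 := lazy_sum (hPdiag y) (hProw y) α
    have hW : kappaAlpha d Pb α x y
        = 1 - W1 d (lazyDist Pb α x) (lazyDist Pb α y) / d x y := rfl
    set W : ℝ := W1 d (lazyDist Pb α x) (lazyDist Pb α y) with hWdef
    apply le_antisymm
    · refine le_csInf hSne ?_
      rintro r ⟨f, hLip, hgrad, rfl⟩
      have hfyx : f y - f x = d x y := by
        rw [div_eq_one_iff_eq hd.ne'] at hgrad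
        exact hgrad
      have hdual := dual_le_W1 hnn hμ0 hμ1 hν0 hν1 hLip
      rw [lazy_dualval (hPdiag x) (hPdiag y) α f] at hdual
      set R : ℝ := ((f y - ∑ u, Pb y u * f u) - (f x - ∑ u, Pb x u * f u)) / d x y with hRdef
      have hRd : R * d x y = (f y - ∑ u, Pb y u * f u) - (f x - ∑ u, Pb x u * f u) :=
        div_mul_cancel₀ _ hd.ne'
      rw [hW, div_le_iff₀ h1α]
      have h7 : (1 - α) * (R * d x y)
          = (1 - α) * ((f y - ∑ u, Pb y u * f u) - (f x - ∑ u, Pb x u * f u)) := by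
        rw [hRd]
      rw [← hWdef] at hdual
      have h9 : (1 - R * (1 - α)) * d x y ≤ W := by nlinarith [hdual, h7, hfyx]
      have h6 : 1 - R * (1 - α) ≤ W / d x y := (le_div_iff₀ hd).mpr h9
      linarith
    · obtain ⟨f, hLip, hWle⟩ := exists_dual_potential hnn hrefl htri hμ0 hμ1 hν0 hν1
      rw [lazy_dualval (hPdiag x) (hPdiag y) α f] at hWle
      rw [← hWdef] at hWle
      set g : V → ℝ := fun v => max (f v) (f x + d x y - d v y) with hgdef
      have hgf : ∀ v, f v ≤ g v := fun v => le_max_left _ _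
      have hgx : g x = f x := by
        show max (f x) (f x + d x y - d x y) = f x
        rw [show f x + d x y - d x y = f x from by ring, max_self]
      have hgy : g y = f x + d x y := by
        show max (f y) (f x + d x y - d y y) = f x + d x y
        rw [hrefl y, sub_zero]
        exact max_eq_right (by have := hLip x y; linarith)
      set δ : ℝ := f x + d x y - f y with hδdef
      have hδ0 : 0 ≤ δ := by have := hLip x y; rw [hδdef]; linarith
      have hgfδ : ∀ v, g v ≤ f v + δ := by
        intro v
        show max (f v) (f x + d x y - d v y) ≤ f v + δ
        refine max_le (by linarith) ?_
        have := hLip v y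
        rw [hδdef]; linarith
      have hglip : ∀ u v, g v - g u ≤ d u v := by
        intro u v
        rw [sub_le_iff_le_add]
        show max (f v) (f x + d x y - d v y) ≤ d u v + g u
        refine max_le ?_ ?_
        · have h1 := hLip u v; have h2 := hgf u; linarith
        · have h1 := htri u v y
          have h2 : f x + d x y - d u y ≤ g u := le_max_right _ _
          linarith
      have hggrad : (g y - g x) / d x y = 1 := by
        rw [hgx, hgy, show f x + d x y - f x = d x y from by ring, div_self hd.ne']
      have hKle : sInf S ≤ ((g y - ∑ u, Pb y u * g u) - (g x - ∑ u, Pb x u * g u)) / d x y :=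
        csInf_le hSbdd ⟨g, hglip, hggrad, rfl⟩
      have hTy : (∑ z, Pb y z * f z) ≤ ∑ z, Pb y z * g z :=
        Finset.sum_le_sum fun z _ => mul_le_mul_of_nonneg_left (hgf z) (hPnn y z)
      have hTx : (∑ z, Pb x z * g z) ≤ (∑ z, Pb x z * f z) + δ := by
        calc (∑ z, Pb x z * g z) ≤ ∑ z, Pb x z * (f z + δ) :=
              Finset.sum_le_sum fun z _ => mul_le_mul_of_nonneg_left (hgfδ z) (hPnn x z)
          _ = (∑ z, Pb x z * f z) + (∑ z, Pb x z) * δ := by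
              rw [Finset.sum_congr rfl (fun z _ => mul_add (Pb x z) (f z) δ),
                Finset.sum_add_distrib, ← Finset.sum_mul]
          _ = (∑ z, Pb x z * f z) + δ := by rw [hProw x, one_mul]
      -- dual value of g dominates that of f
      have hdualg : α * (f y - f x) + (1 - α) * ((∑ z, Pb y z * f z) - ∑ z, Pb x z * f z)
          ≤ α * (g y - g x) + (1 - α) * ((∑ z, Pb y z * g z) - ∑ z, Pb x z * g z) := by
        rw [hgx, hgy]
        have c1 := mul_le_mul_of_nonneg_left hTy h1α.le
        have c2 := mul_le_mul_of_nonneg_left hTx h1α.le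
        have c3 : 0 ≤ (2 * α - 1) * δ := mul_nonneg (by linarith) hδ0
        nlinarith [c1, c2, c3]
      set R : ℝ := ((g y - ∑ u, Pb y u * g u) - (g x - ∑ u, Pb x u * g u)) / d x y with hRdef
      have hRd : R * d x y = (g y - ∑ u, Pb y u * g u) - (g x - ∑ u, Pb x u * g u) :=
        div_mul_cancel₀ _ hd.ne'
      have hgyx : g y - g x = d x y := by rw [hgx, hgy]; ring
      -- W ≤ d x y * (1 - (1 - α) * R)
      have hWup : W ≤ d x y - (1 - α) * (R * d x y) := by
        rw [hRd]
        nlinarith [hWle, hdualg, hgyx]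
      have hWupK : W ≤ d x y - (1 - α) * (sInf S * d x y) := by
        have : (1 - α) * (sInf S * d x y) ≤ (1 - α) * (R * d x y) := by
          have := mul_le_mul_of_nonneg_right hKle hd.le
          exact mul_le_mul_of_nonneg_left this h1α.le
        linarith
      rw [hW, le_div_iff₀ h1α]
      have h8 : W / d x y ≤ 1 - (1 - α) * sInf S := by
        rw [div_le_iff₀ hd]
        nlinarith [hWupK]
      linarith
  have hev : ∀ᶠ β in nhdsWithin (1:ℝ) (Set.Iio 1),
      kappaAlpha d Pb β x y / (1 - β) = sInf S := by
    filter_upwards [Ioo_mem_nhdsLT_of_mem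
      (show (1:ℝ) ∈ Set.Ioc (1/2 : ℝ) 1 from ⟨by norm_num, le_refl 1⟩)] with β hβ
    exact key β hβ.1 hβ.2
  exact Filter.Tendsto.congr' (hev.mono fun β h => h.symm) tendsto_const_nhds
end
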